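/- If ω* ∈ Ω_{m,M} satisfies ASB(ω*) ≥ α and E ∈ R^{m×M} is a perturbation matrix with rows E_{i·} for i < m arbitrary with all entries bounded by ε̄ in absolute value and last row E_{m·} = −∑_{i=1}^{m−1} E_{i·}, then ASB(ω* + E) ≥ α − 2(m−1)·a_k·ε̄, provided ω* + E has nonnegative entries (which holds when ω*_{mj} ≥ (m−1)ε̄ for all j and E_{ij} ∈ [0, ε̄] for i < m). -/

import Mathlib

open Finset Real

namespace MABS

/-- Euclidean norm of a vector in `ℝ^M`. -/
noncomputable def vnorm {M : ℕ} (v : Fin M → ℝ) : ℝ := Real.sqrt (∑ j, (v j) ^ 2)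

/-- Euclidean norm of the `i`-th row of the mixing matrix `ω`. -/
noncomputable def rowNorm {m M : ℕ} (ω : Fin m → Fin M → ℝ) (i : Fin m) : ℝ := vnorm (ω i)

/-- `e` has all its entries in the alphabet `𝔄`. -/
def inAlph (𝔄 : Finset ℝ) {m : ℕ} (e : Fin m → ℝ) : Prop := ∀ i, e i ∈ 𝔄

/-- The mixture `e ω ∈ ℝ^M` of the rows of `ω` with coefficients `e`. -/
noncomputable def mix {m M : ℕ} (e : Fin m → ℝ) (ω : Fin m → Fin M → ℝ) : Fin M → ℝ :=
  fun j => ∑ i, e i * ω i j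

/-- Alphabet separation boundary `ASB(ω) = min_{e ≠ e' ∈ 𝔄^m} ‖eω - e'ω‖ / √M`. -/
noncomputable def ASB (𝔄 : Finset ℝ) {m M : ℕ} (ω : Fin m → Fin M → ℝ) : ℝ :=
  sInf {x : ℝ | ∃ e e' : Fin m → ℝ, inAlph 𝔄 e ∧ inAlph 𝔄 e' ∧ e ≠ e' ∧
    x = vnorm (mix e ω - mix e' ω) / Real.sqrt (M : ℝ)}

/-- `WSB(ω) ≥ δ`, i.e. every consecutive row-norm gap is at least `2δ√M/(1+m·a_k)`. -/
def WSBge (ak δ : ℝ) {m M : ℕ} (ω : Fin m → Fin M → ℝ) : Prop :=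
  ∀ i j : Fin m, (j : ℕ) = (i : ℕ) + 1 →
    δ ≤ ((1 + (m : ℝ) * ak) / (2 * Real.sqrt (M : ℝ))) * (rowNorm ω j - rowNorm ω i)

/-- Weights separation boundary as a real number. -/
noncomputable def WSBval (ak : ℝ) {m M : ℕ} (ω : Fin m → Fin M → ℝ) : ℝ :=
  ((1 + (m : ℝ) * ak) / (2 * Real.sqrt (M : ℝ))) *
    sInf {x : ℝ | ∃ i j : Fin m, (j : ℕ) = (i : ℕ) + 1 ∧ x = rowNorm ω j - rowNorm ω i}

/-- `ω ∈ Ω_{m,M}`: nonnegative entries, columns summing to one, strictly increasing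
positive row norms. -/
def Omega {m M : ℕ} (ω : Fin m → Fin M → ℝ) : Prop :=
  (∀ i j, 0 ≤ ω i j) ∧ (∀ j, ∑ i, ω i j = 1) ∧
    (∀ i, 0 < rowNorm ω i) ∧ StrictMono (rowNorm ω)

/-- The alphabet `𝔄 = {0, 1, a₃, …, a_k}` with `1 < a₃ < … < a_k`: it contains `0` and `1`,
`ak` is its maximal element, and every nonzero element is at least `1`. -/
def AlphOK (𝔄 : Finset ℝ) (ak : ℝ) : Prop :=
  (0 : ℝ) ∈ 𝔄 ∧ (1 : ℝ) ∈ 𝔄 ∧ ak ∈ 𝔄 ∧ (∀ x ∈ 𝔄, x ≤ ak) ∧ (∀ x ∈ 𝔄, x = 0 ∨ 1 ≤ x)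

/-- `Δ𝔄_min`, the minimal distance between distinct alphabet values. -/
noncomputable def DeltaMin (𝔄 : Finset ℝ) : ℝ :=
  sInf {x : ℝ | ∃ a ∈ 𝔄, ∃ b ∈ 𝔄, a ≠ b ∧ x = |a - b|}

/-- The `i`-th standard unit (row) vector in `ℝ^m`. -/
def unitRow {m : ℕ} (i : Fin m) : Fin m → ℝ := fun i' => if i' = i then 1 else 0

/-- `F = ΠA` is a separable finite-alphabet design: every row lies in `𝔄^m` and every
standard unit vector occurs among the rows. -/
def Separable (𝔄 : Finset ℝ) {n m : ℕ} (F : Fin n → Fin m → ℝ) : Prop :=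
  (∀ j, inAlph 𝔄 (F j)) ∧ ∀ i : Fin m, ∃ j, F j = unitRow i

end MABS

open MABS in
lemma vnorm_eq {M : ℕ} (v : Fin M → ℝ) :
    vnorm v = ‖(WithLp.equiv 2 (Fin M → ℝ)).symm v‖ := by
  rw [EuclideanSpace.norm_eq]
  simp [vnorm, sq_abs]

open MABS in
lemma vnorm_rev_triangle {M : ℕ} (A B : Fin M → ℝ) :
    vnorm A - vnorm B ≤ vnorm (A + B) := by
  simp only [vnorm_eq]
  rw [sub_le_iff_le_add]
  have h : (WithLp.equiv 2 (Fin M → ℝ)).symm A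
      = (WithLp.equiv 2 (Fin M → ℝ)).symm (A + B) + (WithLp.equiv 2 (Fin M → ℝ)).symm (-B) := by
    ext j; simp
  calc ‖(WithLp.equiv 2 (Fin M → ℝ)).symm A‖
      = ‖(WithLp.equiv 2 (Fin M → ℝ)).symm (A + B) + (WithLp.equiv 2 (Fin M → ℝ)).symm (-B)‖ := by
        rw [← h]
    _ ≤ ‖(WithLp.equiv 2 (Fin M → ℝ)).symm (A + B)‖ + ‖(WithLp.equiv 2 (Fin M → ℝ)).symm (-B)‖ :=
        norm_add_le _ _
    _ = _ := by
        congr 1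
        have : (WithLp.equiv 2 (Fin M → ℝ)).symm (-B) = -((WithLp.equiv 2 (Fin M → ℝ)).symm B) := by
          ext j; simp
        rw [this, norm_neg]

/-- If `ω ∈ Ω_{m,M}` has `ASB(ω) ≥ α` and `E` is a perturbation with
`|E_{ij}| ≤ ε̄` for `i < m`, last row `E_{m·} = -∑_{i<m} E_{i·}`, and `ω + E` entrywise
nonnegative, then `ASB(ω + E) ≥ α - 2(m-1)·a_k·ε̄`. -/
theorem stmt17 {m M : ℕ} (hm : 0 < m) (hM : 0 < M) (𝔄 : Finset ℝ) (ak α εb : ℝ)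
    (hA : MABS.AlphOK 𝔄 ak) (hεb : 0 ≤ εb)
    (ω : Fin m → Fin M → ℝ) (hΩ : MABS.Omega ω) (hasb : α ≤ MABS.ASB 𝔄 ω)
    (E : Fin m → Fin M → ℝ)
    (hEbd : ∀ (i : Fin m) (j : Fin M), (i : ℕ) < m - 1 → |E i j| ≤ εb)
    (hElast : ∀ j : Fin M, E ⟨m - 1, Nat.sub_lt hm Nat.one_pos⟩ j =
      -∑ i ∈ Finset.univ.filter (fun i : Fin m => (i : ℕ) < m - 1), E i j)
    (hpos : ∀ i j, 0 ≤ ω i j + E i j) :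
    α - 2 * ((m : ℝ) - 1) * ak * εb ≤ MABS.ASB 𝔄 (ω + E) := by
  obtain ⟨h0A, h1A, hakA, hle, hge1⟩ := hA
  have hnonnegA : ∀ x ∈ 𝔄, (0:ℝ) ≤ x := by
    intro x hx
    rcases hge1 x hx with h | h
    · simp [h]
    · linarith
  have habs : ∀ a ∈ 𝔄, ∀ b ∈ 𝔄, |a - b| ≤ ak := by
    intro a ha b hb
    rw [abs_sub_le_iff]
    constructor
    · linarith [hle a ha, hnonnegA b hb]
    · linarith [hle b hb, hnonnegA a ha]
  have hm1 : (1:ℝ) ≤ m := by exact_mod_cast hm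
  have hak1 : (1:ℝ) ≤ ak := hle 1 h1A
  have hak0 : (0:ℝ) ≤ ak := by linarith
  have hC0 : 0 ≤ 2 * ((m : ℝ) - 1) * ak * εb :=
    mul_nonneg (mul_nonneg (mul_nonneg (by norm_num) (by linarith)) hak0) hεb
  have hMR : (0:ℝ) < M := by exact_mod_cast hM
  have hsM : 0 < Real.sqrt M := Real.sqrt_pos.mpr hMR
  set C : ℝ := 2 * ((m : ℝ) - 1) * ak * εb with hCdef
  apply le_csInf
  · refine ⟨_, (fun _ => (1:ℝ)), (fun _ => (0:ℝ)), fun _ => h1A, fun _ => h0A, ?_, rfl⟩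
    intro h
    have := congrFun h ⟨0, hm⟩
    norm_num at this
  · rintro x ⟨e, e', he, he', hne, rfl⟩
    set A : Fin M → ℝ := MABS.mix e ω - MABS.mix e' ω with hAdef
    set B : Fin M → ℝ := MABS.mix e E - MABS.mix e' E with hBdef
    have hsplit : MABS.mix e (ω + E) - MABS.mix e' (ω + E) = A + B := by
      funext j
      simp only [hAdef, hBdef, MABS.mix, Pi.add_apply, Pi.sub_apply, mul_add,
        Finset.sum_add_distrib]
      ring
    -- α ≤ vnorm A / √M
    have hbdd : BddBelow {x : ℝ | ∃ e e' : Fin m → ℝ, MABS.inAlph 𝔄 e ∧ MABS.inAlph 𝔄 e' ∧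
        e ≠ e' ∧ x = MABS.vnorm (MABS.mix e ω - MABS.mix e' ω) / Real.sqrt (M : ℝ)} := by
      refine ⟨0, ?_⟩
      rintro y ⟨a, b, _, _, _, rfl⟩
      exact div_nonneg (Real.sqrt_nonneg _) (Real.sqrt_nonneg _)
    have hαA : α ≤ MABS.vnorm A / Real.sqrt M := by
      refine le_trans hasb (csInf_le hbdd ⟨e, e', he, he', hne, rfl⟩)
    -- componentwise bound on B
    set i0 : Fin m := ⟨m - 1, Nat.sub_lt hm Nat.one_pos⟩ with hi0
    set S : Finset (Fin m) := Finset.univ.filter (fun i : Fin m => (i : ℕ) < m - 1) with hS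
    have hScompl : Finset.univ.filter (fun i : Fin m => ¬ ((i : ℕ) < m - 1)) = {i0} := by
      ext i
      simp only [Finset.mem_filter, Finset.mem_univ, true_and, Finset.mem_singleton]
      constructor
      · intro h
        have := i.isLt
        apply Fin.ext
        simp only [hi0]
        omega
      · intro h
        subst h
        exact Nat.lt_irrefl _
    have hSTcard : S.card = m - 1 := by
      have h1 : S.card + ({i0} : Finset (Fin m)).card = m := by
        rw [← hScompl, hS, Finset.card_filter_add_card_filter_not]
        simp
      simp only [Finset.card_singleton] at h1
      omega
    have hBj : ∀ j, |B j| ≤ C := by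
      intro j
      have hBjeq : B j = ∑ i ∈ S, ((e i - e' i) - (e i0 - e' i0)) * E i j := by
        have hu : (Finset.univ : Finset (Fin m)) = S ∪ {i0} := by
          rw [hS, ← hScompl]
          exact (Finset.filter_union_filter_not_eq _ _).symm
        have hdisj : Disjoint S {i0} := by
          rw [Finset.disjoint_singleton_right, hS]
          simp [hi0]
        have : B j = ∑ i, (e i - e' i) * E i j := by
          simp only [hBdef, MABS.mix, Pi.sub_apply, ← Finset.sum_sub_distrib]
          congr 1; funext i; ring
        rw [this, hu, Finset.sum_union hdisj, Finset.sum_singleton, hElast j, mul_neg,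
          Finset.mul_sum, ← Finset.sum_neg_distrib, ← Finset.sum_add_distrib]
        exact Finset.sum_congr rfl (fun i _ => by ring)
      rw [hBjeq]
      calc |∑ i ∈ S, ((e i - e' i) - (e i0 - e' i0)) * E i j|
          ≤ ∑ i ∈ S, |((e i - e' i) - (e i0 - e' i0)) * E i j| := Finset.abs_sum_le_sum_abs _ _
        _ ≤ ∑ i ∈ S, (2 * ak) * εb := by
            apply Finset.sum_le_sum
            intro i hi
            rw [abs_mul]
            have hi' : (i : ℕ) < m - 1 := by
              rw [hS] at hi; exact (Finset.mem_filter.mp hi).2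
            have hE := hEbd i j hi'
            have hd : |(e i - e' i) - (e i0 - e' i0)| ≤ 2 * ak := by
              have h1 := habs (e i) (he i) (e' i) (he' i)
              have h2 := habs (e i0) (he i0) (e' i0) (he' i0)
              calc |(e i - e' i) - (e i0 - e' i0)| ≤ |e i - e' i| + |e i0 - e' i0| :=
                    abs_sub _ _
                _ ≤ 2 * ak := by linarith
            exact mul_le_mul hd hE (abs_nonneg _) (by linarith)
        _ = (S.card : ℝ) * ((2 * ak) * εb) := by rw [Finset.sum_const, nsmul_eq_mul]
        _ = C := by
            rw [hSTcard, hCdef]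
            have : ((m - 1 : ℕ) : ℝ) = (m : ℝ) - 1 := by
              have : (1:ℕ) ≤ m := hm
              push_cast [this]
              ring
            rw [this]; ring
    have hvB : MABS.vnorm B ≤ Real.sqrt M * C := by
      have h1 : ∑ j, (B j) ^ 2 ≤ (M : ℝ) * C ^ 2 := by
        calc ∑ j, (B j) ^ 2 ≤ ∑ _j : Fin M, C ^ 2 := by
              apply Finset.sum_le_sum
              intro j _
              have := hBj j
              calc (B j)^2 = |B j|^2 := by rw [sq_abs]
                _ ≤ C ^ 2 := by apply pow_le_pow_left₀ (abs_nonneg _) this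
          _ = (M : ℝ) * C ^ 2 := by rw [Finset.sum_const]; simp [nsmul_eq_mul]
      calc MABS.vnorm B ≤ Real.sqrt ((M : ℝ) * C ^ 2) := Real.sqrt_le_sqrt h1
        _ = Real.sqrt M * C := by
            rw [Real.sqrt_mul (le_of_lt hMR), Real.sqrt_sq hC0]
    -- conclude
    rw [hsplit]
    have h2 : MABS.vnorm A - MABS.vnorm B ≤ MABS.vnorm (A + B) := vnorm_rev_triangle A B
    have : α - C ≤ (MABS.vnorm A - MABS.vnorm B) / Real.sqrt M := by
      rw [sub_div, le_sub_iff_add_le]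
      have hB' : MABS.vnorm B / Real.sqrt M ≤ C := by
        rw [div_le_iff₀ hsM]; linarith [hvB]
      linarith [hαA]
    calc α - C ≤ (MABS.vnorm A - MABS.vnorm B) / Real.sqrt M := this
      _ ≤ MABS.vnorm (A + B) / Real.sqrt M := by gcongr
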